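/- Let H be a complex Hilbert space, S a closed subspace, and α ∈ L(H) positive and invertible. Then H = S ∔ α(S^⊥) is a direct sum of subspaces and, denoting by P the bounded idempotent with range S and kernel α(S^⊥), the operator ã : S → S, ã(s) := P(αs), is invertible with inverse s ↦ P_S(α⁻¹s), and ã is a positive invertible operator on the Hilbert space S (⟨P(αs), s⟩ ≥ c‖s‖² for some c > 0 and all s ∈ S). -/

import Mathlib

open ContinuousLinearMap

noncomputable section

variable {H : Type*} [NormedAddCommGroup H] [InnerProductSpace ℂ H] [CompleteSpace H]

/-- The orthogonal projection onto a closed subspace `S`, as an endomorphism of `H`. -/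
def projL (S : Submodule ℂ H) [Submodule.HasOrthogonalProjection S] : H →L[ℂ] H :=
  S.subtypeL.comp S.orthogonalProjectionOnto

/-- The corner `a = P_S B P_S` of the block decomposition of `B` w.r.t. `H = S ⊕ Sᗮ`. -/
def blockA (B : H →L[ℂ] H) (S : Submodule ℂ H) [Submodule.HasOrthogonalProjection S] : H →L[ℂ] H :=
  projL S * B * projL S

/-- The corner `b = P_S B P_{Sᗮ}` of the block decomposition of `B` w.r.t. `H = S ⊕ Sᗮ`. -/
def blockB (B : H →L[ℂ] H) (S : Submodule ℂ H) [Submodule.HasOrthogonalProjection S] : H →L[ℂ] H :=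
  projL S * B * (1 - projL S)

/-- The corner `c = P_{Sᗮ} B P_{Sᗮ}` of the block decomposition of `B` w.r.t. `H = S ⊕ Sᗮ`. -/
def blockC (B : H →L[ℂ] H) (S : Submodule ℂ H) [Submodule.HasOrthogonalProjection S] : H →L[ℂ] H :=
  (1 - projL S) * B * (1 - projL S)

/-- `m = |a|^{1/2}`: `m` is the (unique) positive fourth root of `a⋆ a`. -/
def IsSqrtAbs (a m : H →L[ℂ] H) : Prop :=
  m.IsPositive ∧ m ^ 4 = adjoint a * a

/-- `B` is `S`-weakly complementable: `range b ⊆ range |a|^{1/2}`. -/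
def IsWeaklyComplementable (B : H →L[ℂ] H) (S : Submodule ℂ H)
    [Submodule.HasOrthogonalProjection S] : Prop :=
  ∃ m : H →L[ℂ] H, IsSqrtAbs (blockA B S) m ∧
    LinearMap.range (blockB B S : H →ₗ[ℂ] H) ≤ LinearMap.range (m : H →ₗ[ℂ] H)

/-- `B` is `S`-complementable: `H = S + B⁻¹(Sᗮ)`. -/
def IsComplementable (B : H →L[ℂ] H) (S : Submodule ℂ H) : Prop :=
  S ⊔ Sᗮ.comap (B : H →ₗ[ℂ] H) = ⊤

/-- The set `P(B,S)` of `B`-selfadjoint bounded idempotents onto `S`. -/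
def projSet (B : H →L[ℂ] H) (S : Submodule ℂ H) : Set (H →L[ℂ] H) :=
  {Q | Q * Q = Q ∧ LinearMap.range (Q : H →ₗ[ℂ] H) = S ∧ B * Q = adjoint Q * B}

/-- `Y` is the Schur complement `B_{/S} = [[0,0],[0, c - f⋆ u f]]`, where `f` is the reduced
solution of `b = |a|^{1/2} x` and `a = u |a|` is the polar decomposition of `a`. -/
def IsSchur (B : H →L[ℂ] H) (S : Submodule ℂ H) [Submodule.HasOrthogonalProjection S]
    (Y : H →L[ℂ] H) : Prop :=
  ∃ m u f : H →L[ℂ] H,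
    IsSqrtAbs (blockA B S) m ∧
    LinearMap.ker (u : H →ₗ[ℂ] H) = LinearMap.ker (blockA B S : H →ₗ[ℂ] H) ∧
    (∀ x ∈ (LinearMap.ker (blockA B S : H →ₗ[ℂ] H))ᗮ, ‖u x‖ = ‖x‖) ∧
    blockA B S = u * m ^ 2 ∧
    m * f = blockB B S ∧
    LinearMap.range (f : H →ₗ[ℂ] H) ≤ (LinearMap.range (m : H →ₗ[ℂ] H)).topologicalClosure ∧
    Y = blockC B S - adjoint f * (u * f)

/-- The set `M⁻(B,T)`. -/
def Mminus (B : H →L[ℂ] H) (T : Submodule ℂ H) : Set (H →L[ℂ] H) :=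
  {X | IsSelfAdjoint X ∧ (B - X).IsPositive ∧ LinearMap.range (X : H →ₗ[ℂ] H) ≤ T}

/-- The set `M⁺(B,T)`. -/
def Mplus (B : H →L[ℂ] H) (T : Submodule ℂ H) : Set (H →L[ℂ] H) :=
  {X | IsSelfAdjoint X ∧ (X - B).IsPositive ∧ LinearMap.range (X : H →ₗ[ℂ] H) ≤ T}

/-- `Y` is the Loewner maximum of `M`. -/
def IsMaxOf (M : Set (H →L[ℂ] H)) (Y : H →L[ℂ] H) : Prop :=
  Y ∈ M ∧ ∀ X ∈ M, (Y - X).IsPositive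

/-- `Z` is the Loewner minimum of `M`. -/
def IsMinOf (M : Set (H →L[ℂ] H)) (Z : H →L[ℂ] H) : Prop :=
  Z ∈ M ∧ ∀ X ∈ M, (X - Z).IsPositive

/-- `Z` is the greatest lower bound of `M` in the Loewner order on selfadjoint operators. -/
def IsGLBOf (M : Set (H →L[ℂ] H)) (Z : H →L[ℂ] H) : Prop :=
  IsSelfAdjoint Z ∧ (∀ X ∈ M, (X - Z).IsPositive) ∧
    ∀ F : H →L[ℂ] H, IsSelfAdjoint F → (∀ X ∈ M, (X - F).IsPositive) → (Z - F).IsPositive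

/-- `Y` is the least upper bound of `M` in the Loewner order on selfadjoint operators. -/
def IsLUBOf (M : Set (H →L[ℂ] H)) (Y : H →L[ℂ] H) : Prop :=
  IsSelfAdjoint Y ∧ (∀ X ∈ M, (Y - X).IsPositive) ∧
    ∀ F : H →L[ℂ] H, IsSelfAdjoint F → (∀ X ∈ M, (F - X).IsPositive) → (F - Y).IsPositive

/-- A decomposition `S = S₊ ⊕_B S₋` into a `B`-nonnegative and a `B`-nonpositive part. -/
def IsWDecomp (B : H →L[ℂ] H) (S Sp Sm : Submodule ℂ H) : Prop :=
  (∀ x ∈ Sp, ∀ y ∈ Sm, (inner ℂ x y : ℂ) = 0) ∧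
  Sp ⊔ Sm = S ∧
  (∀ x ∈ Sp, 0 ≤ (inner ℂ (B x) x : ℂ).re) ∧
  (∀ x ∈ Sm, (inner ℂ (B x) x : ℂ).re ≤ 0) ∧
  (∀ x ∈ Sp, ∀ y ∈ Sm, (inner ℂ (B x) y : ℂ) = 0)

/-- `Y` is Krein's shorted operator `B_{/T}` of the positive operator `B` to `T`:
the Loewner maximum of `{X : 0 ≤ X ≤ B, range X ⊆ Tᗮ}`. -/
def IsShort (B : H →L[ℂ] H) (T : Submodule ℂ H) (Y : H →L[ℂ] H) : Prop :=
  (Y.IsPositive ∧ (B - Y).IsPositive ∧ LinearMap.range (Y : H →ₗ[ℂ] H) ≤ Tᗮ) ∧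
    ∀ X : H →L[ℂ] H, X.IsPositive → (B - X).IsPositive → LinearMap.range (X : H →ₗ[ℂ] H) ≤ Tᗮ →
      (Y - X).IsPositive

/-- The set `{R⋆ Q⋆ B Q R : Q² = Q, N(Q) = T}`. -/
def comprSet2 (B R : H →L[ℂ] H) (T : Submodule ℂ H) : Set (H →L[ℂ] H) :=
  {X | ∃ Q : H →L[ℂ] H, Q * Q = Q ∧ LinearMap.ker (Q : H →ₗ[ℂ] H) = T ∧
    X = adjoint R * (adjoint Q * B * Q) * R}

/-- The set `{Q⋆ B Q : Q² = Q, N(Q) = S}`. -/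
def comprSet1 (B : H →L[ℂ] H) (S : Submodule ℂ H) : Set (H →L[ℂ] H) :=
  {X | ∃ Q : H →L[ℂ] H, Q * Q = Q ∧ LinearMap.ker (Q : H →ₗ[ℂ] H) = S ∧ X = adjoint Q * B * Q}

/-- The set `N⁻(W,T)` of the Krein space `(H, [x,y] = ⟨Jx,y⟩)`. -/
def Nminus (J W : H →L[ℂ] H) (T : Submodule ℂ H) : Set (H →L[ℂ] H) :=
  {X | IsSelfAdjoint (J * X) ∧ (J * (W - X)).IsPositive ∧ LinearMap.range (X : H →ₗ[ℂ] H) ≤ T}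

/-- The set `N⁺(W,T)` of the Krein space `(H, [x,y] = ⟨Jx,y⟩)`. -/
def Nplus (J W : H →L[ℂ] H) (T : Submodule ℂ H) : Set (H →L[ℂ] H) :=
  {X | IsSelfAdjoint (J * X) ∧ (J * (X - W)).IsPositive ∧ LinearMap.range (X : H →ₗ[ℂ] H) ≤ T}

/-- `Y` is the maximum of `M` in the Krein order induced by `J`. -/
def KMaxOf (J : H →L[ℂ] H) (M : Set (H →L[ℂ] H)) (Y : H →L[ℂ] H) : Prop :=
  Y ∈ M ∧ ∀ X ∈ M, (J * (Y - X)).IsPositive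

/-- `Z` is the minimum of `M` in the Krein order induced by `J`. -/
def KMinOf (J : H →L[ℂ] H) (M : Set (H →L[ℂ] H)) (Z : H →L[ℂ] H) : Prop :=
  Z ∈ M ∧ ∀ X ∈ M, (J * (X - Z)).IsPositive

/-- `E` is a densely defined projection (idempotent) with kernel `N`. -/
def IsDDProj (N : Submodule ℂ H) (E : H →ₗ.[ℂ] H) : Prop :=
  Dense (E.domain : Set H) ∧
  (∃ h : ∀ x : E.domain, E x ∈ E.domain, ∀ x : E.domain, E ⟨E x, h x⟩ = E x) ∧
  (LinearMap.ker E.toFun).map E.domain.subtype = N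

/-- `G` is the (everywhere defined, bounded) composition `E ∘ T`; in particular
`range T ⊆ dom E`. -/
def IsBddComp (E : H →ₗ.[ℂ] H) (T G : H →L[ℂ] H) : Prop :=
  ∃ h : ∀ x : H, T x ∈ E.domain, ∀ x : H, G x = E ⟨T x, h x⟩

lemma cs_aux (T : H →L[ℂ] H) (hT : T.IsPositive) (x : H) :
    ‖T x‖ ^ 2 ≤ ‖T‖ * (inner ℂ (T x) x : ℂ).re := by
  by_cases h0 : T x = 0
  · simpa [h0] using mul_nonneg (norm_nonneg T) (hT.re_inner_nonneg_left x)
  have hTn : (0:ℝ) < ‖T‖ := by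
    refine norm_pos_iff.mpr ?_
    intro h; exact h0 (by simp [h])
  have hsym := hT.1
  set t : ℝ := ‖T‖⁻¹ with ht
  have key : 0 ≤ (inner ℂ (T (x - (t:ℂ) • T x)) (x - (t:ℂ) • T x) : ℂ).re :=
    hT.re_inner_nonneg_left _
  have hs1 : (inner ℂ (T (T x)) x : ℂ) = inner ℂ (T x) (T x) := hsym (T x) x
  have hTT : (inner ℂ (T (T x)) (T x) : ℂ).re ≤ ‖T‖ * ‖T x‖ ^ 2 := by
    calc (inner ℂ (T (T x)) (T x) : ℂ).re ≤ ‖(inner ℂ (T (T x)) (T x) : ℂ)‖ := Complex.re_le_norm _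
      _ ≤ ‖T (T x)‖ * ‖T x‖ := norm_inner_le_norm _ _
      _ ≤ (‖T‖ * ‖T x‖) * ‖T x‖ := mul_le_mul_of_nonneg_right (T.le_opNorm _) (norm_nonneg _)
      _ = ‖T‖ * ‖T x‖ ^ 2 := by ring
  have expand : (inner ℂ (T (x - (t:ℂ) • T x)) (x - (t:ℂ) • T x) : ℂ).re
      = (inner ℂ (T x) x : ℂ).re - 2 * t * ‖T x‖ ^ 2
        + t ^ 2 * (inner ℂ (T (T x)) (T x) : ℂ).re := by
    have hxx : (inner ℂ (T x) (T x) : ℂ) = (‖T x‖ ^ 2 : ℝ) := by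
      rw [inner_self_eq_norm_sq_to_K]; norm_cast
    have L : ∀ (a b : H), (inner ℂ ((t:ℝ) • a) b : ℂ) = (t:ℂ) * inner ℂ a b := fun a b => by
      rw [RCLike.real_smul_eq_coe_smul (K := ℂ) t a, inner_smul_left, RCLike.conj_ofReal]; rfl
    have R : ∀ (a b : H), (inner ℂ a ((t:ℝ) • b) : ℂ) = (t:ℂ) * inner ℂ a b := fun a b => by
      rw [RCLike.real_smul_eq_coe_smul (K := ℂ) t b, inner_smul_right]; rfl
    simp [map_sub, map_smul, inner_sub_left, inner_sub_right, L, R, hs1, hxx,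
      Complex.mul_re, Complex.ofReal_re, Complex.ofReal_im, ← Complex.ofReal_pow]
    ring
  rw [expand] at key
  have h2 : t ^ 2 * (inner ℂ (T (T x)) (T x) : ℂ).re ≤ t ^ 2 * (‖T‖ * ‖T x‖ ^ 2) :=
    mul_le_mul_of_nonneg_left hTT (sq_nonneg t)
  have h3 : t ^ 2 * (‖T‖ * ‖T x‖ ^ 2) = t * ‖T x‖ ^ 2 := by
    rw [ht]; field_simp
  have h4 : t * ‖T x‖ ^ 2 ≤ (inner ℂ (T x) x : ℂ).re := by linarith
  have h5 : ‖T x‖ ^ 2 = ‖T‖ * (t * ‖T x‖ ^ 2) := by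
    rw [ht]; field_simp
  rw [h5]
  exact mul_le_mul_of_nonneg_left h4 hTn.le


/-- For positive invertible `α`, `H = S ∔ α(Sᗮ)`, and the compression `ã : S → S`,
`ã s = P(α s)` (with `P` the idempotent onto `S` along `α(Sᗮ)`), is invertible with inverse
`s ↦ P_S(α⁻¹ s)` and is a positive invertible operator on `S`. -/
theorem stmt_14 (α : H →L[ℂ] H) (hα : α.IsPositive) (hαu : IsUnit α)
    (S : Submodule ℂ H) [CompleteSpace S] :
    (S ⊓ Sᗮ.map (α : H →ₗ[ℂ] H) = ⊥ ∧ S ⊔ Sᗮ.map (α : H →ₗ[ℂ] H) = ⊤) ∧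
    ∀ P : H →L[ℂ] H, P * P = P → LinearMap.range (P : H →ₗ[ℂ] H) = S → LinearMap.ker (P : H →ₗ[ℂ] H) = Sᗮ.map (α : H →ₗ[ℂ] H) →
      (∀ s ∈ S, projL S (Ring.inverse α (P (α s))) = s) ∧
      (∀ s ∈ S, P (α (projL S (Ring.inverse α s))) = s) ∧
      (∃ c : ℝ, 0 < c ∧ ∀ s ∈ S, c * ‖s‖ ^ 2 ≤ (inner ℂ (P (α s)) s : ℂ).re) := by
  rcases subsingleton_or_nontrivial H with hH | hH
  · refine ⟨⟨Subsingleton.elim _ _, Subsingleton.elim _ _⟩, fun P _ _ _ => ?_⟩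
    refine ⟨fun s _ => Subsingleton.elim _ _, fun s _ => Subsingleton.elim _ _,
      ⟨1, one_pos, fun s _ => ?_⟩⟩
    have hs0 : s = 0 := Subsingleton.elim _ _
    simp [hs0]
  set β := Ring.inverse α with hβdef
  have hαβ : α * β = 1 := Ring.mul_inverse_cancel α hαu
  have hβα : β * α = 1 := Ring.inverse_mul_cancel α hαu
  have hαβx : ∀ x : H, α (β x) = x := fun x => by
    have := DFunLike.congr_fun hαβ x; simpa [mul_apply] using this
  have hβαx : ∀ x : H, β (α x) = x := fun x => by
    have := DFunLike.congr_fun hβα x; simpa [mul_apply] using this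
  -- β is positive
  have hβsa : IsSelfAdjoint β := by
    have h1 : α * star β = 1 := by
      have := congrArg star hβα
      rwa [star_mul, hα.isSelfAdjoint.star_eq, star_one] at this
    have : β * (α * star β) = β * 1 := by rw [h1]
    rw [← mul_assoc, hβα, one_mul, mul_one] at this
    exact isSelfAdjoint_iff.mpr this
  have hβpos : β.IsPositive := by
    refine ⟨isSelfAdjoint_iff_isSymmetric.mp hβsa, fun x => ?_⟩
    calc (0:ℝ) ≤ RCLike.re (inner ℂ (α (β x)) (β x) : ℂ) := hα.re_inner_nonneg_left _
      _ = RCLike.re (inner ℂ (β x) (α (β x)) : ℂ) := inner_re_symm _ _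
      _ = β.reApplyInnerSelf x := by rw [hαβx x]; rfl
  have hα0 : α ≠ 0 := by
    intro h
    obtain ⟨x, hx⟩ := exists_ne (0 : H)
    exact hx (by rw [← hαβx x, h]; simp)
  have hβ0 : β ≠ 0 := by
    intro h
    obtain ⟨x, hx⟩ := exists_ne (0 : H)
    exact hx (by rw [← hβαx x, h]; simp)
  have hαn : (0:ℝ) < ‖α‖ := norm_pos_iff.mpr hα0
  have hβn : (0:ℝ) < ‖β‖ := norm_pos_iff.mpr hβ0
  have hβlow : ∀ x : H, ‖x‖ ≤ ‖α‖ * ‖β x‖ := fun x => by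
    calc ‖x‖ = ‖α (β x)‖ := by rw [hαβx]
      _ ≤ ‖α‖ * ‖β x‖ := α.le_opNorm _
  -- trivial intersection
  have hinf : S ⊓ Sᗮ.map (α : H →ₗ[ℂ] H) = ⊥ := by
    rw [Submodule.eq_bot_iff]
    rintro x ⟨hxS, w, hw, rfl⟩
    have h1 : (inner ℂ (α w) w : ℂ) = 0 := (Submodule.mem_orthogonal S w).mp hw (α w) hxS
    have h2 := cs_aux α hα w
    rw [h1] at h2
    simp only [Complex.zero_re, mul_zero] at h2
    have : ‖α w‖ = 0 := by nlinarith [norm_nonneg (α w)]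
    simpa [norm_eq_zero] using this
  -- the compression of β to S is a unit
  set b : S →L[ℂ] S := (S.orthogonalProjectionOnto) ∘L (β ∘L S.subtypeL) with hbdef
  have hbinner : ∀ s : S, (inner ℂ (b s) s : ℂ) = inner ℂ (β (s:H)) (s:H) := fun s => by
    have h := Submodule.starProjection_inner_eq_zero (K := S) (β (s:H)) (s:H) s.2
    rw [inner_sub_left, sub_eq_zero] at h
    simpa [hbdef, Submodule.coe_inner, Submodule.starProjection_apply] using h
  have hblow : ∀ s : S, ‖s‖ ^ 2 * ((‖α‖ ^ 2 * ‖β‖)⁻¹ : ℝ) ≤ ‖(inner ℂ (b s) s : ℂ)‖ := by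
    intro s
    have h1 : ‖β (s:H)‖ ^ 2 ≤ ‖β‖ * (inner ℂ (β (s:H)) (s:H) : ℂ).re := cs_aux β hβpos _
    have h2 : ‖(s:H)‖ ≤ ‖α‖ * ‖β (s:H)‖ := hβlow _
    have h3 : (inner ℂ (β (s:H)) (s:H) : ℂ).re ≤ ‖(inner ℂ (β (s:H)) (s:H) : ℂ)‖ :=
      Complex.re_le_norm _
    have hns : ‖s‖ = ‖(s:H)‖ := rfl
    rw [hbinner s, hns]
    have hα2 : (0:ℝ) < ‖α‖ ^ 2 := by positivity
    have h6 : ‖(s:H)‖ ^ 2 / ‖α‖ ^ 2 ≤ ‖β (s:H)‖ ^ 2 := by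
      rw [div_le_iff₀ hα2]
      nlinarith [norm_nonneg ((s:H)), norm_nonneg (β (s:H))]
    have h7 : ‖β (s:H)‖ ^ 2 / ‖β‖ ≤ ‖(inner ℂ (β (s:H)) (s:H) : ℂ)‖ := by
      rw [div_le_iff₀ hβn]
      nlinarith [norm_nonneg ((inner ℂ (β (s:H)) (s:H) : ℂ))]
    calc ‖(s:H)‖ ^ 2 * (‖α‖ ^ 2 * ‖β‖)⁻¹ = ‖(s:H)‖ ^ 2 / ‖α‖ ^ 2 / ‖β‖ := by
          rw [div_div, div_eq_mul_inv]
      _ ≤ ‖β (s:H)‖ ^ 2 / ‖β‖ := by gcongr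
      _ ≤ _ := h7
  have hbunit : IsUnit b := by
    refine isUnit_of_forall_le_norm_inner_map b
      (c := ⟨(‖α‖ ^ 2 * ‖β‖)⁻¹, by positivity⟩) ?_ ?_
    · exact_mod_cast (by positivity : (0:ℝ) < (‖α‖ ^ 2 * ‖β‖)⁻¹)
    · intro x
      exact hblow x
  have hbsurj : Function.Surjective b := (ContinuousLinearMap.isUnit_iff_bijective.mp hbunit).2
  have hsup : S ⊔ Sᗮ.map (α : H →ₗ[ℂ] H) = ⊤ := by
    rw [Submodule.eq_top_iff']
    intro x
    obtain ⟨s, hs⟩ := hbsurj (S.orthogonalProjectionOnto (β x))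
    have hperp : β (x - (s:H)) ∈ Sᗮ := by
      rw [← Submodule.orthogonalProjectionOnto_eq_zero_iff]
      have h1 : S.orthogonalProjectionOnto (β (x - (s:H))) =
          S.orthogonalProjectionOnto (β x) - S.orthogonalProjectionOnto (β (s:H)) := by
        rw [map_sub β, map_sub]
      have h2 : S.orthogonalProjectionOnto (β (s:H)) = b s := rfl
      rw [h1, h2, hs, sub_self]
    refine Submodule.mem_sup.mpr
      ⟨(s:H), s.2, α (β (x - (s:H))), Submodule.mem_map_of_mem hperp, ?_⟩
    rw [hαβx]
    abel
  refine ⟨⟨hinf, hsup⟩, fun P hP2 hPr hPk => ?_⟩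
  have hPfix : ∀ y ∈ S, P y = y := by
    intro y hy
    rw [← hPr] at hy
    obtain ⟨z, rfl⟩ := hy
    have := DFunLike.congr_fun hP2 z
    simpa [mul_apply] using this
  have hPker : ∀ w ∈ Sᗮ, P (α w) = 0 := by
    intro w hw
    have : α w ∈ LinearMap.ker (P : H →ₗ[ℂ] H) := by
      rw [hPk]; exact Submodule.mem_map_of_mem hw
    exact LinearMap.mem_ker.mp this
  have hkey : ∀ s ∈ S, s - β (P (α s)) ∈ Sᗮ := by
    intro s hs
    have hPP : P (P (α s)) = P (α s) := by
      have := DFunLike.congr_fun hP2 (α s); simpa [mul_apply] using this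
    have h1 : α s - P (α s) ∈ LinearMap.ker (P : H →ₗ[ℂ] H) := by
      rw [LinearMap.mem_ker, map_sub, ContinuousLinearMap.coe_coe, hPP, sub_self]
    rw [hPk] at h1
    obtain ⟨w, hw, hweq⟩ := h1
    have h3 : s - β (P (α s)) = w := by
      rw [ContinuousLinearMap.coe_coe] at hweq
      rw [← hβαx w, hweq, map_sub, hβαx]
    rw [h3]; exact hw
  have hprojS : ∀ y ∈ S, projL S y = y := by
    intro y hy
    calc projL S y = ((S.orthogonalProjectionOnto (((⟨y, hy⟩ : S) : H)) : S) : H) := rfl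
      _ = y := by rw [Submodule.orthogonalProjectionOnto_mem_subspace_eq_self]
  have hprojPerp : ∀ w ∈ Sᗮ, projL S w = 0 := by
    intro w hw
    simp [projL, Submodule.orthogonalProjectionOnto_apply_of_mem_orthogonal hw]
  refine ⟨?_, ?_, ?_⟩
  · intro s hs
    have hw := hkey s hs
    have h1 : β (P (α s)) = s - (s - β (P (α s))) := by abel
    rw [h1, map_sub, hprojS s hs, hprojPerp _ hw, sub_zero]
  · intro s hs
    have hy : β s - projL S (β s) ∈ Sᗮ := by
      simpa [projL] using Submodule.sub_orthogonalProjectionOnto_mem_orthogonal (K := S) (β s)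
    have h1 : α (β s) = α (projL S (β s)) + α (β s - projL S (β s)) := by
      rw [← map_add]; congr 1; abel
    have h2 : P (α (β s)) = s := by rw [hαβx]; exact hPfix s hs
    rw [h1, map_add, hPker _ hy, add_zero] at h2
    exact h2
  · refine ⟨‖β‖⁻¹, inv_pos.mpr hβn, fun s hs => ?_⟩
    set t := P (α s) with htdef
    have htS : t ∈ S := by rw [← hPr]; exact ⟨α s, rfl⟩
    have hw : s - β t ∈ Sᗮ := hkey s hs
    have e1 : (inner ℂ t s : ℂ) = inner ℂ t (β t) := by
      have h0 : (inner ℂ t (s - β t) : ℂ) = 0 :=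
        (Submodule.mem_orthogonal S (s - β t)).mp hw t htS
      rw [inner_sub_right, sub_eq_zero] at h0
      exact h0
    have e2 : (inner ℂ t s : ℂ).re = (inner ℂ (β t) t : ℂ).re := by
      rw [e1]
      simpa using (inner_re_symm (𝕜 := ℂ) (β t) t).symm
    have cs := cs_aux β hβpos t
    have hst : ‖s‖ ^ 2 ≤ ‖s‖ * ‖β t‖ := by
      have h0 : (inner ℂ s (s - β t) : ℂ) = 0 :=
        (Submodule.mem_orthogonal S (s - β t)).mp hw s hs
      rw [inner_sub_right, sub_eq_zero] at h0
      have h1 : (‖s‖ ^ 2 : ℝ) = (inner ℂ s (β t) : ℂ).re := by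
        rw [← h0]
        simpa using (inner_self_eq_norm_sq (𝕜 := ℂ) s).symm
      rw [h1]
      calc (inner ℂ s (β t) : ℂ).re ≤ ‖(inner ℂ s (β t) : ℂ)‖ := Complex.re_le_norm _
        _ ≤ ‖s‖ * ‖β t‖ := norm_inner_le_norm _ _
    have hs2 : ‖s‖ ^ 2 ≤ ‖β t‖ ^ 2 := by
      nlinarith [sq_nonneg (‖s‖ - ‖β t‖), norm_nonneg s, norm_nonneg (β t)]
    calc ‖β‖⁻¹ * ‖s‖ ^ 2 ≤ ‖β‖⁻¹ * (‖β‖ * (inner ℂ (β t) t : ℂ).re) := by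
          apply mul_le_mul_of_nonneg_left _ (inv_nonneg.mpr hβn.le)
          linarith
      _ = (inner ℂ (β t) t : ℂ).re := by field_simp
      _ = (inner ℂ t s : ℂ).re := e2.symm
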